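/- arXiv:1408.5495 — 2 statements merged into one kernel-verified Lean document; each statement's English description precedes it below -/
import Mathlib

section
/- For every m ≥ 1: (1) the word A_m occurs in the concatenation A_m B_m A_m at exactly two positions, namely 1 and 2^{m+1}+1; (2) the word A_m occurs in the concatenation A_m A_m at exactly two positions, namely 1 and 2^m+1. -/
namespace PD

/-- The period-doubling substitution on the alphabet `Bool`,
where `false` stands for the letter `a` and `true` for the letter `b`:
`σ(a) = ab`, `σ(b) = aa`. -/
def sub : Bool → List Bool
  | false => [false, true]
  | true  => [false, false]

/-- The substitution applied to a finite word. -/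
def subW (w : List Bool) : List Bool := w.flatMap sub

/-- `A m = σ^m(a)`. -/
def A (m : ℕ) : List Bool := subW^[m] [false]

/-- `B m = σ^m(b)`. -/
def B (m : ℕ) : List Bool := subW^[m] [true]

/-- The doubling sequence `D∞` (0-indexed: `D n` is the `(n+1)`-th letter),
the fixed point of `σ` beginning with `a`; `A m` is a prefix of `A (m+1)`,
and `A (n+1)` has length `2^(n+1) > n`. -/
def D (n : ℕ) : Bool := (A (n + 1)).getD n false

/-- `δ m`, the last letter of `A m`. -/
def delta (m : ℕ) : Bool := (A m).getLastD false

/-- The envelope words (`i ∈ {1,2}`): `E m 1 = A m` minus its last letter,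
`E m 2 = A (m-1) ++ (A m` minus its last letter `)`. -/
def E (m i : ℕ) : List Bool :=
  if i = 1 then (A m).dropLast else A (m - 1) ++ (A m).dropLast

/-- `w` occurs at the (1-indexed) position `j` in the finite word `τ`. -/
def OccursIn (w τ : List Bool) (j : ℕ) : Prop :=
  1 ≤ j ∧ (τ.drop (j - 1)).take w.length = w

/-- `w` occurs at the (1-indexed) position `j` in the doubling sequence. -/
def OccursD (w : List Bool) (j : ℕ) : Prop :=
  1 ≤ j ∧ ∀ k < w.length, D (j - 1 + k) = w.getD k false

/-- `w` is a factor of the doubling sequence. -/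
def FactorD (w : List Bool) : Prop := ∃ j, OccursD w j

/-- `L w p`: the (1-indexed) starting position of the `p`-th occurrence of `w`
in the doubling sequence, occurrences being ordered by starting position.
(Each factor occurs infinitely often, so `Nat.nth` enumerates all occurrences
in increasing order.) -/
noncomputable def L (w : List Bool) (p : ℕ) : ℕ := Nat.nth (OccursD w) (p - 1)

/-- The strict total order on envelope words:
`E m₁ i₁ ⊏ E m₂ i₂` iff `m₁ < m₂`, or `m₁ = m₂` and `i₁ < i₂`. -/
def EnvLt (m₁ i₁ m₂ i₂ : ℕ) : Prop := m₁ < m₂ ∨ (m₁ = m₂ ∧ i₁ < i₂)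

/-- `Env(w) = E m i`: the envelope word `E m i` is the `⊏`-minimal envelope
word containing `w` as a factor. -/
def IsEnv (w : List Bool) (m i : ℕ) : Prop :=
  1 ≤ m ∧ (i = 1 ∨ i = 2) ∧ w <:+: E m i ∧
    ∀ m' i', 1 ≤ m' → (i' = 1 ∨ i' = 2) → EnvLt m' i' m i → ¬ w <:+: E m' i'

/-- The substitution `φ₁(a) = a`, `φ₁(b) = bb`. -/
def phi1 : Bool → List Bool
  | false => [false]
  | true  => [true, true]

/-- `Θ₁ = φ₁(D∞)` (0-indexed): `φ₁(A (n+1))` is a prefix of `Θ₁` of length `> n`. -/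
def Theta1 (n : ℕ) : Bool := ((A (n + 1)).flatMap phi1).getD n false

/-- The substitution `φ₂(a) = ab`, `φ₂(b) = acac`, over the alphabet `Fin 3`
where `0` stands for `a`, `1` for `b` and `2` for `c`. -/
def phi2 : Bool → List (Fin 3)
  | false => [0, 1]
  | true  => [0, 2, 0, 2]

/-- `Θ₂ = φ₂(D∞)` (0-indexed). -/
def Theta2 (n : ℕ) : Fin 3 := ((A (n + 1)).flatMap phi2).getD n 0

/-- `N₁(x,p)`: the number of letters `x` among the first `p` letters of `Θ₁`. -/
def N1 (x : Bool) (p : ℕ) : ℕ := ((List.range p).map Theta1).count x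

/-- `N₂(x,p)`: the number of letters `x` among the first `p` letters of `Θ₂`. -/
def N2 (x : Fin 3) (p : ℕ) : ℕ := ((List.range p).map Theta2).count x

end PD

open PD
section Aux

/-- occurrence at 0-indexed offset -/
def Occ (w τ : List Bool) (p : ℕ) : Prop := (τ.drop p).take w.length = w

lemma occ_iff (w τ : List Bool) (p : ℕ) :
    Occ w τ p ↔ ∀ i < w.length, τ[p+i]? = w[i]? := by
  constructor
  · intro h i hi
    have := congrArg (fun l => l[i]?) h
    simpa [List.getElem?_take, hi, List.getElem?_drop] using this
  · intro h
    apply List.ext_getElem?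
    intro i
    by_cases hi : i < w.length
    · rw [List.getElem?_take, if_pos hi, List.getElem?_drop]; exact h i hi
    · rw [List.getElem?_take, if_neg hi, eq_comm, List.getElem?_eq_none_iff]
      omega

lemma subW_append (x y : List Bool) : subW (x ++ y) = subW x ++ subW y :=
  List.flatMap_append

lemma A_succ (m : ℕ) : A (m+1) = subW (A m) :=
  Function.iterate_succ_apply' subW m [false]

lemma B_succ (m : ℕ) : B (m+1) = subW (B m) :=
  Function.iterate_succ_apply' subW m [true]

lemma length_subW (τ : List Bool) : (subW τ).length = 2 * τ.length := by
  induction τ with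
  | nil => rfl
  | cons c t ih =>
    have : subW (c :: t) = sub c ++ subW t := rfl
    rw [this, List.length_append, ih]
    cases c <;> simp [sub] <;> omega

lemma length_A (m : ℕ) : (A m).length = 2^m := by
  induction m with
  | zero => rfl
  | succ m ih => rw [A_succ, length_subW, ih, pow_succ]; ring

lemma length_B (m : ℕ) : (B m).length = 2^m := by
  induction m with
  | zero => rfl
  | succ m ih => rw [B_succ, length_subW, ih, pow_succ]; ring

lemma subW_getElem? (τ : List Bool) (k : ℕ) :
    (subW τ)[2*k]? = τ[k]?.map (fun _ => false) ∧
    (subW τ)[2*k+1]? = τ[k]?.map (fun c => !c) := by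
  induction τ generalizing k with
  | nil => simp [subW]
  | cons c t ih =>
    have hs : subW (c :: t) = sub c ++ subW t := rfl
    have h2 : (sub c).length = 2 := by cases c <;> rfl
    cases k with
    | zero => cases c <;> simp [subW, sub]
    | succ k =>
      rw [hs]
      constructor
      · rw [List.getElem?_append_right (by omega)]
        have e : 2*(k+1) - (sub c).length = 2*k := by omega
        rw [e, (ih k).1]
        simp
      · rw [List.getElem?_append_right (by omega)]
        have e : 2*(k+1)+1 - (sub c).length = 2*k+1 := by omega
        rw [e, (ih k).2]
        simp

lemma A_getElem?_zero (m : ℕ) : (A m)[0]? = some false := by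
  induction m with
  | zero => rfl
  | succ m ih =>
    rw [A_succ]
    have := (subW_getElem? (A m) 0).1
    simpa [ih] using this

lemma A_getElem?_one (m : ℕ) : (A (m+1))[1]? = some true := by
  rw [A_succ]
  have := (subW_getElem? (A m) 0).2
  simp only [A_getElem?_zero, Option.map_some] at this; exact this

/-- recognizability step -/
lemma occ_subW_A {τ : List Bool} {m p : ℕ}
    (h : Occ (A (m+1)) (subW τ) p) : ∃ q, p = 2*q ∧ Occ (A m) τ q := by
  rw [occ_iff] at h
  have hlen1 : (A (m+1)).length = 2^(m+1) := length_A _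
  have hlen0 : (A m).length = 2^m := length_A _
  have hpow : 1 ≤ 2^m := Nat.one_le_two_pow
  have h1 : (subW τ)[p+1]? = some true := by
    have := h 1 (by rw [hlen1, pow_succ]; omega)
    rwa [A_getElem?_one] at this
  -- parity
  have hp : p % 2 = 0 := by
    by_contra hodd
    have e : p + 1 = 2 * ((p+1)/2) := by omega
    rw [e, (subW_getElem? τ ((p+1)/2)).1] at h1
    cases hx : τ[(p+1)/2]? <;> simp [hx] at h1
  refine ⟨p/2, by omega, ?_⟩
  rw [occ_iff]
  intro i hi
  have hi' : 2*i+1 < (A (m+1)).length := by rw [hlen1, pow_succ]; omega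
  have hh := h (2*i+1) hi'
  have e1 : p + (2*i+1) = 2*(p/2 + i) + 1 := by omega
  rw [e1, (subW_getElem? τ (p/2+i)).2, A_succ, (subW_getElem? (A m) i).2] at hh
  have hy : (A m)[i]? = some (A m)[i] := List.getElem?_eq_getElem hi
  rw [hy] at hh ⊢
  cases hx : τ[p/2+i]? with
  | none => rw [hx] at hh; simp at hh
  | some v =>
    rw [hx] at hh
    simp only [Option.map_some] at hh
    have hv : v = (A m)[i] := Bool.not_inj (Option.some.inj hh)
    rw [hv]

lemma occ_prefix (w r : List Bool) : Occ w (w ++ r) 0 := by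
  simpa [Occ] using List.take_left w r

lemma occ_suffix (u w : List Bool) : Occ w (u ++ w) u.length := by
  simp [Occ, List.drop_left, List.take_length]

end Aux
lemma key (m : ℕ) (hm : 1 ≤ m) :
    (∀ p, Occ (A m) (A m ++ B m ++ A m) p ↔ (p = 0 ∨ p = 2^(m+1))) ∧
    (∀ p, Occ (A m) (A m ++ A m) p ↔ (p = 0 ∨ p = 2^m)) := by
  induction m with
  | zero => omega
  | succ m ih =>
    rcases Nat.eq_or_lt_of_le hm with hm1 | hm2
    · -- base case m+1 = 1
      have hA : A 1 = [false, true] := rfl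
      have hB : B 1 = [false, false] := rfl
      rw [← hm1]
      constructor
      · intro p
        constructor
        · intro h
          have hb : p ≤ 4 := by
            have := congrArg List.length h
            simp [Occ, hA, hB] at this ⊢
            omega
          unfold Occ at h
          rw [hA, hB] at h
          interval_cases p <;> revert h <;> decide
        · rintro (rfl | rfl) <;> (unfold Occ; rw [hA, hB]) <;> decide
      · intro p
        constructor
        · intro h
          have hb : p ≤ 2 := by
            have := congrArg List.length h
            simp [Occ, hA] at this ⊢
            omega
          unfold Occ at h
          rw [hA] at h
          interval_cases p <;> revert h <;> decide
        · rintro (rfl | rfl) <;> (unfold Occ; rw [hA]) <;> decide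
    · -- inductive step: m ≥ 1
      have hm' : 1 ≤ m := by omega
      obtain ⟨ih1, ih2⟩ := ih hm'
      have hA : A (m+1) = subW (A m) := A_succ m
      have hB : B (m+1) = subW (B m) := B_succ m
      have hτ1 : A (m+1) ++ B (m+1) ++ A (m+1) = subW (A m ++ B m ++ A m) := by
        rw [hA, hB, subW_append, subW_append]
      have hτ2 : A (m+1) ++ A (m+1) = subW (A m ++ A m) := by
        rw [hA, subW_append]
      constructor
      · intro p
        constructor
        · intro h
          rw [hτ1] at h
          obtain ⟨q, rfl, hq⟩ := occ_subW_A h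
          rcases (ih1 q).1 hq with rfl | rfl
          · left; rfl
          · right; rw [pow_succ]; ring
        · rintro (rfl | rfl)
          · rw [List.append_assoc]; exact occ_prefix _ _
          · have : (2:ℕ)^(m+1+1) = (A (m+1) ++ B (m+1)).length := by
              rw [List.length_append, length_A, length_B, pow_succ]; ring
            rw [this]
            exact occ_suffix _ _
      · intro p
        constructor
        · intro h
          rw [hτ2] at h
          obtain ⟨q, rfl, hq⟩ := occ_subW_A h
          rcases (ih2 q).1 hq with rfl | rfl
          · left; rfl
          · right; rw [pow_succ]; ring
        · rintro (rfl | rfl)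
          · exact occ_prefix _ _
          · have : (2:ℕ)^(m+1) = (A (m+1)).length := (length_A _).symm
            rw [this]
            exact occ_suffix _ _

/-- For every `m ≥ 1`: (1) `A m` occurs in `A m ++ B m ++ A m` at exactly the
(1-indexed) positions `1` and `2^(m+1)+1`; (2) `A m` occurs in `A m ++ A m` at
exactly the positions `1` and `2^m+1`. -/
theorem doubling_positions_A (m : ℕ) (hm : 1 ≤ m) :
    {j : ℕ | OccursIn (A m) (A m ++ B m ++ A m) j} = {1, 2 ^ (m + 1) + 1} ∧
      {j : ℕ | OccursIn (A m) (A m ++ A m) j} = {1, 2 ^ m + 1} := by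
  obtain ⟨k1, k2⟩ := key m hm
  constructor
  · ext j
    simp only [Set.mem_setOf_eq, Set.mem_insert_iff, Set.mem_singleton_iff, OccursIn]
    constructor
    · rintro ⟨hj, h⟩
      have := (k1 (j-1)).1 h
      omega
    · rintro (rfl | rfl)
      · exact ⟨le_refl 1, (k1 0).2 (Or.inl rfl)⟩
      · refine ⟨Nat.le_add_left 1 _, ?_⟩
        have e : 2^(m+1) + 1 - 1 = 2^(m+1) := Nat.add_sub_cancel _ _
        rw [e]
        exact (k1 _).2 (Or.inr rfl)
  · ext j
    simp only [Set.mem_setOf_eq, Set.mem_insert_iff, Set.mem_singleton_iff, OccursIn]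
    constructor
    · rintro ⟨hj, h⟩
      have := (k2 (j-1)).1 h
      omega
    · rintro (rfl | rfl)
      · exact ⟨le_refl 1, (k2 0).2 (Or.inl rfl)⟩
      · refine ⟨Nat.le_add_left 1 _, ?_⟩
        have e : 2^m + 1 - 1 = 2^m := Nat.add_sub_cancel _ _
        rw [e]
        exact (k2 _).2 (Or.inr rfl)
end

section
/- (Uniqueness of envelope extension, weak version.) Let ω be a nonempty factor of the doubling sequence D∞ and suppose Env(ω) = E_{m,i} for some m ≥ 1 and i ∈ {1,2}. Then ω occurs at exactly one position in E_{m,i}; in particular there exist unique words μ₁(ω) and μ₂(ω) with E_{m,i} = μ₁(ω)·ω·μ₂(ω). -/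
open PD

namespace PD

/-- 0-indexed occurrence. -/
def Occ0 (w τ : List Bool) (s : ℕ) : Prop := (τ.drop s).take w.length = w

theorem occ0_length {w τ : List Bool} {s : ℕ} (hw : w ≠ []) (h : Occ0 w τ s) :
    s + w.length ≤ τ.length := by
  have hl := congrArg List.length h
  simp only [List.length_take, List.length_drop] at hl
  have hn : 0 < w.length := List.length_pos_iff.2 hw
  omega

theorem infix_iff_occ0 {w τ : List Bool} : w <:+: τ ↔ ∃ s, Occ0 w τ s := by
  constructor
  · rintro ⟨p, t, rfl⟩
    refine ⟨p.length, ?_⟩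
    unfold Occ0
    rw [List.append_assoc, List.drop_left, List.take_left]
  · rintro ⟨s, h⟩
    refine ⟨τ.take s, (τ.drop s).drop w.length, ?_⟩
    have h2 := List.take_append_drop w.length (τ.drop s)
    rw [h] at h2
    rw [List.append_assoc, h2, List.take_append_drop]

theorem occ0_getD {w τ : List Bool} {s : ℕ} (hw : w ≠ []) (h : Occ0 w τ s) :
    ∀ t < w.length, τ.getD (s + t) false = w.getD t false := by
  intro t ht
  have hb := occ0_length hw h
  have h1 : s + t < τ.length := by omega
  rw [List.getD_eq_getElem _ _ h1, List.getD_eq_getElem _ _ ht]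
  have h2 : t < (List.take w.length (τ.drop s)).length := by
    simp only [List.length_take, List.length_drop]; omega
  have h4 : w[t] = (List.take w.length (τ.drop s))[t] := List.getElem_of_eq h.symm ht
  rw [h4, List.getElem_take, List.getElem_drop]
theorem occ0_of_getD {w τ : List Bool} {s : ℕ}
    (hlen : s + w.length ≤ τ.length)
    (h : ∀ t < w.length, τ.getD (s + t) false = w.getD t false) :
    Occ0 w τ s := by
  apply List.ext_getElem
  · simp only [List.length_take, List.length_drop]; omega
  · intro t h1 h2
    simp only [List.length_take, List.length_drop] at h1
    have ht : t < w.length := by omega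
    have h3 : s + t < τ.length := by omega
    have := h t ht
    rw [List.getD_eq_getElem _ _ h3, List.getD_eq_getElem _ _ ht] at this
    rw [List.getElem_take, List.getElem_drop]
    exact this

theorem occ0_take {w τ : List Bool} {s j : ℕ} (hj : j ≤ w.length) (h : Occ0 w τ s) :
    Occ0 (w.take j) τ s := by
  unfold Occ0 at *
  rw [List.length_take, min_eq_left hj, ← h, List.take_take, min_eq_left hj]

theorem occ0_cons_tail {x : Bool} {w τ : List Bool} {s : ℕ} (h : Occ0 (x :: w) τ s) :
    Occ0 w τ (s + 1) := by
  unfold Occ0 at *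
  have hb := occ0_length (by simp) h
  simp only [List.length_cons] at h hb
  have hs : s < τ.length := by omega
  rw [List.drop_eq_getElem_cons hs] at h
  rw [List.take_succ_cons] at h
  exact List.tail_eq_of_cons_eq h

theorem occ0_cons {x : Bool} {w τ : List Bool} {s : ℕ} (hw : w ≠ [])
    (hx : τ.getD s false = x) (h : Occ0 w τ (s + 1)) : Occ0 (x :: w) τ s := by
  have hb := occ0_length hw h
  have hn : 0 < w.length := List.length_pos_iff.2 hw
  have hs : s < τ.length := by omega
  unfold Occ0 at *
  rw [List.drop_eq_getElem_cons hs, List.length_cons, List.take_succ_cons, h]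
  rw [List.getD_eq_getElem _ _ hs] at hx
  rw [hx]

theorem occ0_append_getD {w τ : List Bool} {s : ℕ} {x : Bool}
    (h : Occ0 w τ s) (hlt : s + w.length < τ.length)
    (hx : τ.getD (s + w.length) false = x) : Occ0 (w ++ [x]) τ s := by
  apply occ0_of_getD
  · simp only [List.length_append, List.length_singleton]; omega
  · intro t ht
    simp only [List.length_append, List.length_singleton] at ht
    rcases Nat.lt_or_ge t w.length with h1 | h1
    · rw [List.getD_append _ _ _ _ h1]
      exact occ0_getD (by intro hc; simp [hc] at h1) h t h1
    · have : t = w.length := by omega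
      subst this
      rw [hx]
      have : w.length = w.length + 0 := rfl
      rw [List.getD_append_right _ _ _ _ (le_refl _)]
      simp

theorem occ0_append_left {w τ τ' : List Bool} {s : ℕ} (hb : s + w.length ≤ τ.length)
    (h : Occ0 w τ s) : Occ0 w (τ ++ τ') s := by
  unfold Occ0 at *
  rw [List.drop_append_of_le_length (by omega),
    List.take_append_of_le_length (by simp; omega), h]

theorem occ0_append_extract {w τ τ' : List Bool} {s : ℕ}
    (hb : s + w.length ≤ τ.length) (h : Occ0 w (τ ++ τ') s) : Occ0 w τ s := by
  unfold Occ0 at *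
  rw [List.drop_append_of_le_length (by omega),
    List.take_append_of_le_length (by simp; omega)] at h
  exact h

end PD

namespace PD

theorem subW_nil : subW [] = [] := rfl
theorem subW_cons (x : Bool) (l : List Bool) : subW (x :: l) = sub x ++ subW l := rfl
theorem subW_append (l l' : List Bool) : subW (l ++ l') = subW l ++ subW l' := by
  simp [subW]

theorem length_subW (l : List Bool) : (subW l).length = 2 * l.length := by
  induction l with
  | nil => rfl
  | cons x t ih => cases x <;> simp [subW_cons, ih, sub] <;> omega

theorem subW_inj {l l' : List Bool} (h : subW l = subW l') : l = l' := by
  induction l generalizing l' with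
  | nil =>
    have := congrArg List.length h
    rw [length_subW, length_subW] at this
    simp at this
    exact this.symm
  | cons x t ih =>
    cases l' with
    | nil =>
      have := congrArg List.length h
      rw [length_subW, length_subW] at this
      simp at this
    | cons y t' =>
      rw [subW_cons, subW_cons] at h
      cases x <;> cases y <;> simp [sub] at h <;> rw [ih h]

theorem subW_drop (s : ℕ) (l : List Bool) : (subW l).drop (2 * s) = subW (l.drop s) := by
  induction s generalizing l with
  | zero => simp
  | succ n ih =>
    cases l with
    | nil => simp [subW_nil]
    | cons x t =>
      have h2 : 2 * (n + 1) = 2 * n + 2 := by ring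
      rw [h2, subW_cons]
      cases x <;> simp only [sub] <;>
        · rw [show ∀ (a b : Bool) (r : List Bool), ([a, b] ++ r).drop (2*n+2) = r.drop (2*n)
            from fun a b r => rfl]
          rw [ih]
          rfl

theorem subW_take (s : ℕ) (l : List Bool) : (subW l).take (2 * s) = subW (l.take s) := by
  induction s generalizing l with
  | zero => simp [subW_nil]
  | succ n ih =>
    cases l with
    | nil => simp [subW_nil]
    | cons x t =>
      have h2 : 2 * (n + 1) = 2 * n + 2 := by ring
      rw [h2, subW_cons]
      cases x <;> simp only [sub] <;>
        · rw [show ∀ (a b : Bool) (r : List Bool), ([a, b] ++ r).take (2*n+2)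
              = a :: b :: r.take (2*n) from fun a b r => rfl]
          rw [ih, List.take_succ_cons, subW_cons]
          rfl

theorem getD_subW_even (u : List Bool) (t : ℕ) (ht : t % 2 = 0) :
    (subW u ++ [false]).getD t false = false := by
  induction u generalizing t with
  | nil =>
    rcases t with _ | t
    · rfl
    · rw [subW_nil]
      exact List.getD_eq_default _ _ (by simp)
  | cons x tl ih =>
    rcases t with _ | _ | t
    · cases x <;> rfl
    · omega
    · have h3 : (subW (x :: tl) ++ [false]).getD (t + 2) false
          = (subW tl ++ [false]).getD t false := by
        rw [subW_cons, List.append_assoc]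
        cases x <;> rfl
      rw [h3]
      exact ih t (by omega)

theorem getD_subW_odd (u : List Bool) (q : ℕ) (hq : q < u.length) :
    (subW u).getD (2 * q + 1) false = !(u.getD q false) := by
  induction u generalizing q with
  | nil => simp at hq
  | cons x tl ih =>
    rcases q with _ | q
    · cases x <;> rfl
    · have h3 : (subW (x :: tl)).getD (2 * (q+1) + 1) false
          = (subW tl).getD (2 * q + 1) false := by
        rw [subW_cons, show 2*(q+1)+1 = (2*q+1)+2 by ring]
        cases x <;> rfl
      rw [h3, ih q (by simpa using Nat.lt_of_succ_lt_succ (by simpa using hq))]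
      rfl

theorem A_succ (k : ℕ) : A (k + 1) = subW (A k) := Function.iterate_succ_apply' subW k [false]

theorem length_A (k : ℕ) : (A k).length = 2 ^ k := by
  induction k with
  | zero => rfl
  | succ n ih => rw [A_succ, length_subW, ih, pow_succ]; ring

theorem A_ne_nil (k : ℕ) : A k ≠ [] := by
  intro h
  have h1 := length_A k
  rw [h] at h1
  have h2 : (2:ℕ)^k ≠ 0 := by positivity
  simp at h1
  omega

theorem dropLast_subW {u : List Bool} (hu : u ≠ []) :
    (subW u).dropLast = subW u.dropLast ++ [false] := by
  induction u with
  | nil => exact absurd rfl hu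
  | cons x tl ih =>
    cases tl with
    | nil => cases x <;> rfl
    | cons y tl' =>
      rw [subW_cons, List.dropLast_append_of_ne_nil (by
        intro hc
        have := congrArg List.length hc
        rw [length_subW] at this
        simp at this)]
      rw [ih (by simp), show (x :: y :: tl').dropLast = x :: (y :: tl').dropLast from rfl,
        subW_cons, List.append_assoc]

theorem E_succ (k : ℕ) (hk : 1 ≤ k) (i : ℕ) :
    E (k + 1) i = subW (E k i) ++ [false] := by
  unfold E
  by_cases hi : i = 1
  · simp only [hi, if_true]
    rw [A_succ, dropLast_subW (A_ne_nil k)]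
  · simp only [hi, if_false]
    rw [show k + 1 - 1 = k from rfl, subW_append, A_succ, dropLast_subW (A_ne_nil k),
      ← List.append_assoc]
    congr 2
    obtain ⟨k', rfl⟩ : ∃ k', k = k' + 1 := ⟨k - 1, by omega⟩
    rw [show k' + 1 - 1 = k' from rfl, A_succ]

end PD

namespace PD

theorem occ0_prepend_iff {w : List Bool} (hw : w ≠ []) (u' : List Bool) (k : ℕ) :
    Occ0 w (subW u' ++ [false]) (2*k+1) ↔ Occ0 (false :: w) (subW u' ++ [false]) (2*k) := by
  constructor
  · intro h
    exact occ0_cons hw (getD_subW_even u' (2*k) (by omega)) h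
  · exact occ0_cons_tail

theorem occ0_dropLast_iff {x : List Bool} (hx2 : 2 ≤ x.length) (hodd : x.length % 2 = 1)
    (hlast : x.getD (x.length - 1) false = false) (u' : List Bool) (k : ℕ) :
    Occ0 x (subW u' ++ [false]) (2*k) ↔ Occ0 x.dropLast (subW u' ++ [false]) (2*k) := by
  constructor
  · intro h
    rw [List.dropLast_eq_take]
    exact occ0_take (by omega) h
  · intro h
    have hxne : x ≠ [] := by intro hc; rw [hc] at hx2; simp at hx2
    have hdne : x.dropLast ≠ [] := by
      intro hc
      have := congrArg List.length hc
      simp [List.length_dropLast] at this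
      omega
    have hb := occ0_length hdne h
    have hτ : (subW u' ++ [false]).length = 2 * u'.length + 1 := by
      simp [length_subW]
    rw [List.length_dropLast] at hb
    have hlt : 2*k + x.dropLast.length < (subW u' ++ [false]).length := by
      rw [List.length_dropLast, hτ]
      omega
    have hp : (2*k + x.dropLast.length) % 2 = 0 := by
      rw [List.length_dropLast]; omega
    have hgd : (subW u' ++ [false]).getD (2*k + x.dropLast.length) false = false :=
      getD_subW_even u' _ hp
    have h2 := occ0_append_getD h hlt hgd
    have h3 : x.dropLast ++ [false] = x := by
      conv_rhs => rw [← List.dropLast_append_getLast hxne]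
      congr 1
      rw [List.getLast_eq_getElem, ← List.getD_eq_getElem x false (by omega)]
      rw [hlast]
    rwa [h3] at h2

theorem core_package {w : List Bool} {t₀ : ℕ} (ht₀ : t₀ < w.length)
    (htrue : w.getD t₀ false = true)
    (hlast : ((t₀+1) % 2 + w.length) % 2 = 1 → w.getD (w.length - 1) false = false) :
    ∃ w₂ : List Bool, w₂.length % 2 = 0 ∧ true ∈ w₂ ∧
      ∀ u' k, (Occ0 w (subW u' ++ [false]) (2*k + (t₀+1) % 2) ↔
        Occ0 w₂ (subW u' ++ [false]) (2*k)) := by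
  have hwne : w ≠ [] := by intro hc; rw [hc] at ht₀; simp at ht₀
  have hmem : true ∈ w := by
    rw [← htrue, List.getD_eq_getElem _ _ ht₀]
    exact List.getElem_mem ht₀
  rcases Nat.mod_two_eq_zero_or_one (t₀+1) with hρ | hρ <;>
    rcases Nat.mod_two_eq_zero_or_one w.length with hn | hn
  · -- ρ = 0, n even : w₂ = w
    exact ⟨w, hn, hmem, fun u' k => by rw [hρ, Nat.add_zero]⟩
  · -- ρ = 0, n odd : w₂ = w.dropLast
    have hl := hlast (by omega)
    have ht₀' : t₀ ≠ w.length - 1 := by omega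
    have htd : t₀ < w.dropLast.length := by rw [List.length_dropLast]; omega
    refine ⟨w.dropLast, by rw [List.length_dropLast]; omega, ?_, fun u' k => by
      rw [hρ, Nat.add_zero]
      exact occ0_dropLast_iff (by omega) hn hl u' k⟩
    have : w.dropLast[t₀]'htd = true := by
      rw [List.getElem_dropLast, ← List.getD_eq_getElem w false ht₀, htrue]
    rw [← this]
    exact List.getElem_mem htd
  · -- ρ = 1, n even : w₂ = (false :: w).dropLast
    have hl := hlast (by omega)
    have hn1 : 1 ≤ w.length := by omega
    have ht₀' : t₀ ≠ w.length - 1 := by omega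
    have hxlen : (false :: w).length = w.length + 1 := by simp
    have hxlast : (false :: w).getD ((false :: w).length - 1) false = false := by
      rw [hxlen, Nat.add_sub_cancel]
      obtain ⟨n', hn'⟩ : ∃ n', w.length = n' + 1 := ⟨w.length - 1, by omega⟩
      rw [hn', List.getD_cons_succ, ← Nat.add_sub_cancel n' 1, ← hn']
      exact hl
    have htd : t₀ + 1 < (false :: w).dropLast.length := by
      rw [List.length_dropLast, hxlen]; omega
    refine ⟨(false :: w).dropLast, by rw [List.length_dropLast, hxlen]; omega, ?_,
      fun u' k => by
        rw [hρ]
        exact (occ0_prepend_iff hwne u' k).trans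
          (occ0_dropLast_iff (by rw [hxlen]; omega) (by rw [hxlen]; omega) hxlast u' k)⟩
    have : (false :: w).dropLast[t₀ + 1]'htd = true := by
      rw [List.getElem_dropLast, List.getElem_cons_succ,
        ← List.getD_eq_getElem w false ht₀, htrue]
    rw [← this]
    exact List.getElem_mem htd
  · -- ρ = 1, n odd : w₂ = false :: w
    exact ⟨false :: w, by simp; omega, by simp [hmem], fun u' k => by
      rw [hρ]
      exact occ0_prepend_iff hwne u' k⟩

end PD

namespace PD

theorem E11 : E 1 1 = [false] := by rfl
theorem E12 : E 1 2 = [false, false] := by rfl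

theorem occ0_subW_iff {v : List Bool} (hvne : v ≠ []) (u' : List Bool) (σ : ℕ) :
    Occ0 v u' σ ↔ Occ0 (subW v) (subW u' ++ [false]) (2*σ) := by
  constructor
  · intro h
    have hb := occ0_length hvne h
    have h1 : Occ0 (subW v) (subW u') (2*σ) := by
      unfold Occ0
      rw [length_subW, subW_drop, subW_take, h]
    exact occ0_append_left (by rw [length_subW, length_subW]; omega) h1
  · intro h
    have hsne : subW v ≠ [] := by
      intro hc
      have := congrArg List.length hc
      rw [length_subW] at this
      simp at this
      exact hvne this
    have hb := occ0_length hsne h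
    rw [List.length_append, length_subW, length_subW] at hb
    simp only [List.length_singleton] at hb
    have hb2 : 2*σ + 2*v.length ≤ 2*u'.length := by omega
    have h1 := occ0_append_extract (by rw [length_subW, length_subW]; omega) h
    unfold Occ0 at h1 ⊢
    rw [length_subW, subW_drop, subW_take] at h1
    exact subW_inj h1

theorem occ0_desub {w₂ u' : List Bool} {σ ℓ : ℕ} (hne : w₂ ≠ []) (hlen : w₂.length = 2*ℓ)
    (h : Occ0 w₂ (subW u' ++ [false]) (2*σ)) : subW ((u'.drop σ).take ℓ) = w₂ := by
  have hb := occ0_length hne h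
  rw [List.length_append, length_subW] at hb
  simp only [List.length_singleton] at hb
  have hb2 : 2*σ + w₂.length ≤ 2*u'.length := by omega
  have h1 := occ0_append_extract (by rw [length_subW]; omega) h
  unfold Occ0 at h1
  rw [hlen, subW_drop, subW_take] at h1
  exact h1

theorem noTT {M i : ℕ} (hM : 1 ≤ M) (hi : i = 1 ∨ i = 2) :
    ∀ s, ¬ Occ0 [true, true] (E M i) s := by
  intro s hocc
  have hne : ([true, true] : List Bool) ≠ [] := by simp
  rcases Nat.lt_or_ge M 2 with h2 | h2
  · have hM1 : M = 1 := by omega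
    subst hM1
    have hb := occ0_length hne hocc
    have hg := occ0_getD hne hocc 0 (by simp)
    rcases hi with rfl | rfl
    · rw [E11] at hb; simp at hb
    · rw [E12] at hg hb
      simp only [List.length_cons, List.length_nil] at hb
      have hs : s = 0 := by simp at hb; omega
      subst hs
      simp [List.getD] at hg
  · obtain ⟨M', rfl⟩ : ∃ M', M = M' + 1 + 1 := ⟨M - 2, by omega⟩
    rw [E_succ (M'+1) (by omega) i] at hocc
    have hg0 := occ0_getD hne hocc 0 (by simp)
    have hg1 := occ0_getD hne hocc 1 (by simp)
    simp only [List.getD_cons_zero, List.getD_cons_succ] at hg0 hg1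
    rcases Nat.mod_two_eq_zero_or_one s with hp | hp
    · rw [getD_subW_even _ _ (by omega)] at hg0; simp at hg0
    · rw [getD_subW_even _ _ (by omega)] at hg1; simp at hg1

theorem Qlemma {u' : List Bool} (h : ∀ q, ¬ Occ0 [true, true] u' q) :
    ∀ s, ¬ Occ0 (List.replicate 4 false) (subW u' ++ [false]) s := by
  intro s hocc
  have hne : (List.replicate 4 false : List Bool) ≠ [] := by simp
  have hb := occ0_length hne hocc
  rw [List.length_append, length_subW, List.length_replicate] at hb
  simp only [List.length_singleton] at hb
  have hget : ∀ t < 4, (subW u' ++ [false]).getD (s + t) false = false := by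
    intro t ht
    have := occ0_getD hne hocc t (by simpa using ht)
    rw [this]
    have : t < (List.replicate 4 false).length := by simpa using ht
    rw [List.getD_eq_getElem _ _ this, List.getElem_replicate]
  obtain ⟨a, ha1, ha3, hab⟩ : ∃ a, (subW u' ++ [false]).getD (2*a+1) false = false ∧
      (subW u' ++ [false]).getD (2*a+3) false = false ∧ 2*a + 3 ≤ 2 * u'.length := by
    rcases Nat.mod_two_eq_zero_or_one s with hp | hp
    · refine ⟨s/2, ?_, ?_, by omega⟩
      · have := hget 1 (by omega); rwa [show s + 1 = 2*(s/2)+1 by omega] at this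
      · have := hget 3 (by omega); rwa [show s + 3 = 2*(s/2)+3 by omega] at this
    · refine ⟨s/2, ?_, ?_, by omega⟩
      · have := hget 0 (by omega); rwa [show s + 0 = 2*(s/2)+1 by omega] at this
      · have := hget 2 (by omega); rwa [show s + 2 = 2*(s/2)+3 by omega] at this
  rw [List.getD_append _ _ _ _ (by rw [length_subW]; omega)] at ha1 ha3
  rw [getD_subW_odd u' a (by omega)] at ha1
  rw [show 2*a+3 = 2*(a+1)+1 by ring] at ha3
  rw [getD_subW_odd u' (a+1) (by omega)] at ha3
  apply h a
  apply occ0_of_getD (by simp; omega)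
  intro t ht
  simp only [List.length_cons, List.length_nil] at ht
  interval_cases t
  · simp only [List.getD_cons_zero, Nat.add_zero]
    simpa using ha1
  · simp only [List.getD_cons_succ, List.getD_cons_zero]
    simpa using ha3

end PD

namespace PD

theorem E21 : E 2 1 = [false, true, false] := by rfl
theorem E22 : E 2 2 = [false, true, false, true, false] := by rfl
theorem E31 : E 3 1 = [false, true, false, false, false, true, false] := by rfl

theorem main_unique : ∀ m, ∀ i w, w ≠ [] → IsEnv w m i → ∃! s, Occ0 w (E m i) s := by
  intro m
  induction m with
  | zero => intro i w hw h; exact absurd h.1 (by omega)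
  | succ M ih =>
    intro i w hw henv
    obtain ⟨hm1, hi, hinf, hmin⟩ := henv
    obtain ⟨s₁, hs₁⟩ := infix_iff_occ0.1 hinf
    have hn1 : 1 ≤ w.length := List.length_pos_iff.2 hw
    rcases Nat.eq_zero_or_pos M with rfl | hM
    · -- m = 1 : concrete
      rcases hi with rfl | rfl
      · rw [E11] at hs₁ ⊢
        have hb := occ0_length hw hs₁
        simp only [List.length_cons, List.length_nil] at hb
        refine ⟨0, ?_, ?_⟩
        · have : s₁ = 0 := by omega
          rwa [this] at hs₁
        · intro s' hs'
          have := occ0_length hw hs'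
          simp only [List.length_cons, List.length_nil] at this
          omega
      · rw [E12] at hs₁ ⊢
        have hb := occ0_length hw hs₁
        simp only [List.length_cons, List.length_nil] at hb
        rcases Nat.lt_or_ge w.length 2 with h2 | h2
        · -- w is a single letter, necessarily false: contradiction with minimality
          exfalso
          have hn : w.length = 1 := by omega
          have hg := occ0_getD hw hs₁ 0 (by omega)
          have hgf : ([false, false] : List Bool).getD (s₁ + 0) false = false := by
            rcases Nat.lt_or_ge (s₁ + 0) 2 with hlt | hge
            · rw [List.getD_eq_getElem _ _ (by simpa using hlt)]
              have hs1b : s₁ ≤ 1 := by omega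
              interval_cases s₁ <;> rfl
            · exact List.getD_eq_default _ _ (by simpa using hge)
          rw [hgf] at hg
          have hwf : w = [false] := by
            obtain ⟨x, rfl⟩ : ∃ x, w = [x] := by
              cases w with
              | nil => exact absurd rfl hw
              | cons a t =>
                cases t with
                | nil => exact ⟨a, rfl⟩
                | cons b t' => simp at hn
            simp only [List.getD_cons_zero] at hg
            rw [← hg]
          apply hmin 1 1 le_rfl (Or.inl rfl) (Or.inr ⟨rfl, by omega⟩)
          rw [hwf, E11]
        · have hn : w.length = 2 := by omega
          have hs0 : s₁ = 0 := by omega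
          have hweq : w = [false, false] := by
            rw [← hs₁, hs0, hn]; rfl
          refine ⟨0, ?_, ?_⟩
          · rw [hweq] at hs₁ ⊢
            rwa [hs0] at hs₁
          · intro s' hs'
            have := occ0_length hw hs'
            simp only [List.length_cons, List.length_nil] at this
            omega
    · -- m = M + 1 with M ≥ 1
      have hE : E (M+1) i = subW (E M i) ++ [false] := E_succ M hM i
      by_cases htw : true ∈ w
      · -- w contains the letter b
        obtain ⟨t₀, ht₀, htrue⟩ : ∃ t, t < w.length ∧ w.getD t false = true := by
          obtain ⟨t, ht, hx⟩ := List.mem_iff_getElem.1 htw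
          exact ⟨t, ht, by rw [List.getD_eq_getElem _ _ ht, hx]⟩
        have hpar : ∀ s, Occ0 w (E (M+1) i) s → s % 2 = (t₀+1) % 2 := by
          intro s hs
          have hg := occ0_getD hw hs t₀ ht₀
          rw [htrue, hE] at hg
          have h1 : (s + t₀) % 2 = 1 := by
            by_contra hc
            rw [getD_subW_even _ _ (by omega)] at hg
            simp at hg
          omega
        have hρs₁ := hpar s₁ hs₁
        have hlast : ((t₀+1) % 2 + w.length) % 2 = 1 →
            w.getD (w.length - 1) false = false := by
          intro hp
          have hg := occ0_getD hw hs₁ (w.length - 1) (by omega)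
          rw [hE] at hg
          rw [getD_subW_even _ _ (by omega)] at hg
          exact hg.symm
        obtain ⟨w₂, hw₂len, hw₂t, hcore⟩ := core_package ht₀ htrue hlast
        have hw₂ne : w₂ ≠ [] := List.ne_nil_of_mem hw₂t
        have hw₂l : w₂.length = 2 * (w₂.length / 2) := by omega
        have hs₁' : s₁ = 2 * (s₁ / 2) + (t₀+1) % 2 := by omega
        have hocc₂ : Occ0 w₂ (subW (E M i) ++ [false]) (2 * (s₁ / 2)) := by
          apply (hcore (E M i) (s₁ / 2)).1
          rw [← hs₁', ← hE]
          exact hs₁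
        have hv : subW (((E M i).drop (s₁ / 2)).take (w₂.length / 2)) = w₂ :=
          occ0_desub hw₂ne hw₂l hocc₂
        set v := ((E M i).drop (s₁ / 2)).take (w₂.length / 2) with hvdef
        have hvne : v ≠ [] := by
          intro hc
          rw [hc] at hv
          exact hw₂ne hv.symm
        have htrans : ∀ (u' : List Bool) σ,
            Occ0 w₂ (subW u' ++ [false]) (2*σ) ↔ Occ0 v u' σ := by
          intro u' σ
          rw [← hv]
          exact (occ0_subW_iff hvne u' σ).symm
        have hvinf : v <:+: E M i :=
          (List.take_prefix _ _).isInfix.trans (List.drop_suffix _ _).isInfix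
        have henvv : IsEnv v M i := by
          refine ⟨hM, hi, hvinf, ?_⟩
          intro m' i' hm' hi' hlt hvi
          obtain ⟨σ', hσ'⟩ := infix_iff_occ0.1 hvi
          have h1 : Occ0 w₂ (subW (E m' i') ++ [false]) (2*σ') := (htrans _ σ').2 hσ'
          have h2 : Occ0 w (subW (E m' i') ++ [false]) (2*σ' + (t₀+1)%2) :=
            (hcore _ σ').2 h1
          rw [← E_succ m' hm' i'] at h2
          refine hmin (m'+1) i' (by omega) hi' ?_ (infix_iff_occ0.2 ⟨_, h2⟩)
          rcases hlt with h | ⟨rfl, h⟩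
          · exact Or.inl (by omega)
          · exact Or.inr ⟨rfl, h⟩
        obtain ⟨σo, hoccv, huniqv⟩ := ih i v hvne henvv
        refine ⟨2*σo + (t₀+1)%2, ?_, ?_⟩
        · rw [hE]
          exact (hcore _ σo).2 ((htrans _ σo).2 hoccv)
        · intro s' hs'
          have hps' := hpar s' hs'
          have hs'eq : s' = 2*(s'/2) + (t₀+1)%2 := by omega
          rw [hs'eq, hE] at hs'
          have h1 := (hcore _ (s'/2)).1 hs'
          have h2 := (htrans _ (s'/2)).1 h1
          rw [hs'eq, huniqv _ h2]
      · -- w is all a's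
        have hall : w = List.replicate w.length false := by
          apply List.eq_replicate_of_mem
          intro b hb
          cases b
          · rfl
          · exact absurd hb htw
        rcases Nat.lt_or_ge w.length 4 with h4 | h4
        · -- length 1, 2, or 3
          have h123 : w.length = 1 ∨ w.length = 2 ∨ w.length = 3 := by omega
          rcases h123 with hn | hn | hn
          · exfalso
            apply hmin 1 1 (by omega) (Or.inl rfl) (Or.inl (by omega))
            rw [hall, hn, E11]
            rfl
          · exfalso
            apply hmin 1 2 (by omega) (Or.inr rfl) (Or.inl (by omega))
            rw [hall, hn, E12]
            rfl
          · -- w = aaa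
            have hwe : w = [false, false, false] := by rw [hall, hn]; rfl
            rcases Nat.lt_or_ge M 2 with hM2 | hM2
            · -- m = 2 : aaa is not a factor of E 2 i at all
              exfalso
              have hM1 : M = 1 := by omega
              subst hM1
              rw [hwe] at hinf
              rcases hi with rfl | rfl
              · rw [E21] at hinf
                exact (by decide : ¬ [false,false,false] <:+: [false,true,false]) hinf
              · rw [E22] at hinf
                exact (by decide :
                  ¬ [false,false,false] <:+: [false,true,false,true,false]) hinf
            · rcases Nat.lt_or_ge M 3 with hM3 | hM3
              · -- m = 3
                have hM2' : M = 2 := by omega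
                subst hM2'
                rcases hi with rfl | rfl
                · -- goal case : unique occurrence of aaa in E 3 1
                  rw [hwe, E31]
                  refine ⟨2, by unfold Occ0; decide, ?_⟩
                  intro s' hs'
                  have hb := occ0_length (by simp) hs'
                  simp only [List.length_cons, List.length_nil] at hb
                  have hs'b : s' ≤ 4 := by omega
                  unfold Occ0 at hs'
                  interval_cases s' <;> revert hs' <;> decide
                · exfalso
                  apply hmin 3 1 (by omega) (Or.inl rfl) (Or.inr ⟨rfl, by omega⟩)
                  rw [hwe, E31]
                  decide
              · -- m ≥ 4
                exfalso
                apply hmin 3 1 (by omega) (Or.inl rfl) (Or.inl (by omega))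
                rw [hwe, E31]
                decide
        · -- length ≥ 4 : impossible, aaaa is not a factor
          exfalso
          have hocc4 : Occ0 (List.replicate 4 false) (E (M+1) i) s₁ := by
            have := occ0_take (j := 4) (by omega) hs₁
            rwa [hall, List.take_replicate, show 4 ⊓ w.length = 4 by omega] at this
          rw [hE] at hocc4
          exact Qlemma (noTT hM hi) s₁ hocc4

end PD

/-- Uniqueness of envelope extension, weak version: if `w` is a nonempty factor of
the doubling sequence with `Env(w) = E m i`, then `w` occurs at exactly one
position in `E m i`; in particular there are unique words `μ₁, μ₂` with
`E m i = μ₁ · w · μ₂`. -/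
theorem doubling_envelope_unique_weak (w : List Bool) (hw : w ≠ []) (hfac : FactorD w)
    (m i : ℕ) (henv : IsEnv w m i) :
    (∃! j : ℕ, OccursIn w (E m i) j) ∧
      (∃! μ : List Bool × List Bool, E m i = μ.1 ++ w ++ μ.2) := by
  obtain ⟨s, hs, huniq⟩ := PD.main_unique m i w hw henv
  constructor
  · refine ⟨s + 1, ⟨by omega, by simpa [Occ0] using hs⟩, ?_⟩
    intro j hj
    obtain ⟨hj1, hj2⟩ := hj
    have : j - 1 = s := huniq _ hj2
    omega
  · refine ⟨((E m i).take s, (E m i).drop (s + w.length)), ?_, ?_⟩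
    · show E m i = (E m i).take s ++ w ++ (E m i).drop (s + w.length)
      conv_lhs => rw [← List.take_append_drop s (E m i)]
      rw [List.append_assoc]
      congr 1
      conv_lhs => rw [← List.take_append_drop w.length ((E m i).drop s)]
      rw [hs, List.drop_drop]
    · rintro ⟨μ₁, μ₂⟩ hμ
      simp only at hμ
      have hocc : Occ0 w (E m i) μ₁.length := by
        unfold Occ0
        rw [hμ, List.append_assoc, List.drop_left, List.take_left]
      have hlen : μ₁.length = s := huniq _ hocc
      have h1 : μ₁ = (E m i).take s := by
        rw [← hlen, hμ, List.append_assoc, List.take_left]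
      have h2 : μ₂ = (E m i).drop (s + w.length) := by
        rw [hμ, ← hlen, show μ₁.length + w.length = (μ₁ ++ w).length by simp,
          List.drop_left]
      rw [Prod.ext_iff]
      exact ⟨h1, h2⟩
end
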